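/- arXiv:2310.14988 — 2 statements merged into one kernel-verified Lean document; each statement's English description precedes it below -/
import Mathlib

section
/- Let W be the right-angled Coxeter group of a finite simple graph Γ, let Λ ⊆ Γ be an induced subgraph and g ∈ W an element such that g W_{Λ ∪ Link(Λ)} g⁻¹ ⊇ W_Λ. Write g = g₁ g₂ g₃ with g₁ ∈ W_Λ, g₃ ∈ W_{Λ∪Link(Λ)} and g₂ having no letters from Λ at the start and no letters from Λ ∪ Link(Λ) at the end. Then g₂ ∈ W_{Link(Λ ∪ Link(Λ))} and hence g ∈ W_{Λ ∪ Link(Λ)}. -/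
def racgRels {V : Type*} (G : SimpleGraph V) : Set (FreeGroup V) :=
  {r | (∃ v, r = FreeGroup.of v * FreeGroup.of v) ∨
    ∃ u v, G.Adj u v ∧ r = FreeGroup.of u * FreeGroup.of v * FreeGroup.of u * FreeGroup.of v}

abbrev RACG {V : Type*} (G : SimpleGraph V) : Type _ := PresentedGroup (racgRels G)

def racgGen {V : Type*} (G : SimpleGraph V) (v : V) : RACG G := PresentedGroup.of v

def specialSubgroup {V : Type*} (G : SimpleGraph V) (S : Set V) : Subgroup (RACG G) :=
  Subgroup.closure (racgGen G '' S)

def linkSet {V : Type*} (G : SimpleGraph V) (S : Set V) : Set V :=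
  {u | ∀ s ∈ S, G.Adj u s}

noncomputable def wordLength {V : Type*} (G : SimpleGraph V) (g : RACG G) : ℕ :=
  sInf {n | ∃ l : List V, l.length = n ∧ (l.map (racgGen G)).prod = g}

lemma racgGen_sq {V : Type*} (G : SimpleGraph V) (v : V) :
    racgGen G v * racgGen G v = 1 := by
  have h : (QuotientGroup.mk (FreeGroup.of v * FreeGroup.of v) :
      PresentedGroup (racgRels G)) = 1 := by
    rw [QuotientGroup.eq_one_iff]
    exact Subgroup.subset_normalClosure (Or.inl ⟨v, rfl⟩)
  simp only [racgGen, PresentedGroup.of, ← map_mul]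
  exact h

lemma racgGen_comm {V : Type*} (G : SimpleGraph V) {u v : V} (h : G.Adj u v) :
    racgGen G u * racgGen G v * racgGen G u * racgGen G v = 1 := by
  have h' : (QuotientGroup.mk (FreeGroup.of u * FreeGroup.of v * FreeGroup.of u * FreeGroup.of v) :
      PresentedGroup (racgRels G)) = 1 := by
    rw [QuotientGroup.eq_one_iff]
    exact Subgroup.subset_normalClosure (Or.inr ⟨u, v, h, rfl⟩)
  simp only [racgGen, PresentedGroup.of, ← map_mul]
  exact h'

lemma racg_induce_lift {V : Type*} (G : SimpleGraph V) {S : Set V} {H : Type*} [Group H]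
    (f : S → H) (hsq : ∀ v : S, f v * f v = 1)
    (hcomm : ∀ u v : S, G.Adj ↑u ↑v → f u * f v * f u * f v = 1) :
    ∀ r ∈ racgRels (G.induce S), FreeGroup.lift f r = 1 := by
  rintro r (⟨v, rfl⟩ | ⟨u, v, hadj, rfl⟩)
  · simpa [map_mul] using hsq v
  · have h' : G.Adj ↑u ↑v := hadj
    simpa [map_mul] using hcomm u v h'

/-- The canonical homomorphism between special subgroups induced by an inclusion of
vertex sets. -/
def racgMapHom {V : Type*} (G : SimpleGraph V) {S T : Set V} (h : S ⊆ T) :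
    RACG (G.induce S) →* RACG (G.induce T) :=
  PresentedGroup.toGroup (f := fun v : S => racgGen (G.induce T) ⟨v.1, h v.2⟩)
    (racg_induce_lift G _
      (fun v => racgGen_sq _ _)
      (fun u v hadj => racgGen_comm (G.induce T) (by exact hadj)))

/-- The canonical homomorphism from the special subgroup on `S` to the full
right-angled Coxeter group. -/
def racgInclHom {V : Type*} (G : SimpleGraph V) (S : Set V) :
    RACG (G.induce S) →* RACG G :=
  PresentedGroup.toGroup (f := fun v : S => racgGen G ↑v)
    (racg_induce_lift G _
      (fun v => racgGen_sq _ _)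
      (fun u v hadj => racgGen_comm G hadj))

namespace RacgAux
open scoped Classical

open CoxeterSystem List

variable {V : Type*} (G : SimpleGraph V)

/-- The Coxeter matrix of a right-angled Coxeter group. -/
noncomputable def racgMatrix : CoxeterMatrix V where
  M := Matrix.of fun i j => if i = j then 1 else if G.Adj i j then 2 else 0
  isSymm := by
    unfold Matrix.IsSymm
    ext i j
    by_cases h : i = j
    · simp [h]
    · by_cases h2 : G.Adj i j <;>
        simp [Matrix.of_apply, h, Ne.symm h, G.adj_comm i j, h2]
  diagonal i := by simp
  off_diagonal i j h := by
    by_cases h2 : G.Adj i j <;> simp [Matrix.of_apply, h, h2]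

lemma racg_normalClosure_eq :
    Subgroup.normalClosure (racgRels G) =
      Subgroup.normalClosure ((racgMatrix G).relationsSet) := by
  apply _root_.le_antisymm
  · apply Subgroup.normalClosure_le_normal
    rintro r (⟨v, rfl⟩ | ⟨u, v, hadj, rfl⟩)
    · apply Subgroup.subset_normalClosure
      refine ⟨(v, v), ?_⟩
      simp [CoxeterMatrix.relation, racgMatrix, Function.uncurry]
    · apply Subgroup.subset_normalClosure
      refine ⟨(u, v), ?_⟩
      have : (racgMatrix G).M u v = 2 := by
        simp [racgMatrix, hadj.ne, hadj]
      show CoxeterMatrix.relation (racgMatrix G) u v = _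
      rw [CoxeterMatrix.relation]
      show (FreeGroup.of u * FreeGroup.of v) ^ ((racgMatrix G).M u v) = _
      rw [this]
      rw [pow_two]
      group
  · apply Subgroup.normalClosure_le_normal
    rintro r ⟨⟨u, v⟩, rfl⟩
    show (FreeGroup.of u * FreeGroup.of v) ^ ((racgMatrix G).M u v) ∈ _
    by_cases h : u = v
    · subst h
      have : (racgMatrix G).M u u = 1 := by simp [racgMatrix]
      rw [this, pow_one]
      exact Subgroup.subset_normalClosure (Or.inl ⟨u, rfl⟩)
    · by_cases h2 : G.Adj u v
      · have : (racgMatrix G).M u v = 2 := by simp [racgMatrix, h, h2]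
        rw [this, pow_two]
        apply Subgroup.subset_normalClosure
        right
        exact ⟨u, v, h2, by group⟩
      · have : (racgMatrix G).M u v = 0 := by simp [racgMatrix, h, h2]
        rw [this, pow_zero]
        exact Subgroup.one_mem _

/-- The isomorphism between the abstract Coxeter group on `racgMatrix G` and `RACG G`. -/
noncomputable def racgEquiv : (racgMatrix G).Group ≃* RACG G :=
  QuotientGroup.quotientMulEquivOfEq (racg_normalClosure_eq G).symm

/-- The Coxeter system on `RACG G`. -/
noncomputable def racgCS : CoxeterSystem (racgMatrix G) (RACG G) :=
  (racgMatrix G).toCoxeterSystem.map (racgEquiv G)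

lemma racgCS_simple (i : V) : (racgCS G).simple i = racgGen G i := by
  show racgEquiv G ((racgMatrix G).toCoxeterSystem.simple i) = racgGen G i
  rfl

lemma racgCS_wordProd (l : List V) :
    (racgCS G).wordProd l = (l.map (racgGen G)).prod := by
  rw [CoxeterSystem.wordProd,
    show List.map (racgCS G).simple l = l.map (racgGen G) from
      List.map_congr_left fun i _ => racgCS_simple G i]

lemma exists_reduced_word_old (g : RACG G) :
    ∃ ω : List V, ω.length = (racgCS G).length g ∧ g = (racgCS G).wordProd ω := by
  obtain ⟨ω, h1, h2⟩ := (racgCS G).exists_isReduced g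
  exact ⟨ω, by rw [h2, h1.eq], h2⟩

lemma wordLength_eq (g : RACG G) : wordLength G g = (racgCS G).length g := by
  apply _root_.le_antisymm
  · obtain ⟨ω, hlen, hprod⟩ := exists_reduced_word_old G g
    apply Nat.sInf_le
    exact ⟨ω, hlen, by rw [← racgCS_wordProd, hprod]⟩
  · have hne : {n | ∃ l : List V, l.length = n ∧ (l.map (racgGen G)).prod = g}.Nonempty := by
      obtain ⟨ω, hlen, hprod⟩ := exists_reduced_word_old G g
      exact ⟨ω.length, ω, rfl, by rw [← racgCS_wordProd, hprod]⟩
    obtain ⟨l, hlen, hprod⟩ := Nat.sInf_mem hne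
    calc (racgCS G).length g ≤ l.length := by
          rw [← hprod, ← racgCS_wordProd]; exact (racgCS G).length_wordProd_le l
      _ = wordLength G g := hlen

end RacgAux
namespace RacgAux

open CoxeterSystem List
open scoped Classical

variable {V : Type*} (G : SimpleGraph V)

lemma zmod2_add_self : ∀ a : ZMod 2, a + a = 0 := by decide

lemma zmod2_addfour : ∀ a b : ZMod 2, a + b + a + b = 0 := by decide

/-- The parity homomorphism counting occurrences of the letter `x`. -/
noncomputable def theta (x : V) : RACG G →* Multiplicative (ZMod 2) :=
  PresentedGroup.toGroup
    (f := fun v => Multiplicative.ofAdd (if v = x then (1 : ZMod 2) else 0))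
    (by
      rintro r (⟨v, rfl⟩ | ⟨u, v, hadj, rfl⟩)
      · simp only [map_mul, FreeGroup.lift_apply_of, ← ofAdd_add]
        rw [zmod2_add_self]
        rfl
      · simp only [map_mul, FreeGroup.lift_apply_of, ← ofAdd_add]
        rw [zmod2_addfour]
        rfl)

lemma theta_gen (x v : V) :
    theta G x (racgGen G v) = Multiplicative.ofAdd (if v = x then (1 : ZMod 2) else 0) :=
  PresentedGroup.toGroup.of _

lemma theta_prod (x : V) (l : List V) :
    theta G x ((l.map (racgGen G)).prod) = Multiplicative.ofAdd ((l.count x : ZMod 2)) := by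
  induction l with
  | nil => simp
  | cons a l ih =>
      simp only [map_cons, prod_cons, map_mul, theta_gen, ih, ← ofAdd_add, count_cons]
      congr 1
      by_cases h : a = x <;> simp [h, add_comm]

/-- If a generator is conjugate to a generator, the letters agree. -/
lemma conj_gen_eq {c e : V} {w : RACG G} (h : racgGen G c = w * racgGen G e * w⁻¹) :
    c = e := by
  by_contra hne
  have h2 := congrArg (theta G c) h
  rw [map_mul, map_mul, map_inv, theta_gen, theta_gen,
    if_pos rfl, if_neg (show ¬ e = c from fun he => hne he.symm)] at h2
  rw [ofAdd_zero, mul_one, mul_inv_cancel] at h2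
  exact absurd h2 (by decide)

lemma gen_inv (v : V) : (racgGen G v)⁻¹ = racgGen G v :=
  inv_eq_of_mul_eq_one_right (racgGen_sq G v)

lemma gen_comm_of_adj {u v : V} (h : G.Adj u v) :
    racgGen G u * racgGen G v = racgGen G v * racgGen G u := by
  have h1 := racgGen_comm G h
  have h2 : racgGen G u * racgGen G v = (racgGen G u * racgGen G v)⁻¹ := by
    rw [eq_inv_iff_mul_eq_one]
    rw [show racgGen G u * racgGen G v * (racgGen G u * racgGen G v) =
      racgGen G u * racgGen G v * racgGen G u * racgGen G v by group]
    exact h1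
  rw [h2, mul_inv_rev, gen_inv, gen_inv]

/-- Reflection of `ℤ` about `-1/2`. -/
def alphaPerm : Equiv.Perm ℤ :=
  Function.Involutive.toPerm (fun n => -n - 1) (fun n => by ring)

/-- Reflection of `ℤ` about `1/2`. -/
def betaPerm : Equiv.Perm ℤ :=
  Function.Involutive.toPerm (fun n => 1 - n) (fun n => by ring)

@[simp] lemma alphaPerm_apply (n : ℤ) : alphaPerm n = -n - 1 := rfl
@[simp] lemma betaPerm_apply (n : ℤ) : betaPerm n = 1 - n := rfl

/-- The generator images for the dihedral homomorphism. -/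
noncomputable def dgen (a c v : V) : Equiv.Perm ℤ :=
  if v = a then alphaPerm else if v = c then betaPerm else 1

lemma dgen_sq (a c v : V) : dgen a c v * dgen a c v = 1 := by
  unfold dgen
  split_ifs <;> · ext n; simp [Equiv.Perm.mul_apply]; try ring

/-- The homomorphism to `Perm ℤ` sending `a`, `c` to two reflections generating an
infinite dihedral group, and all other generators to `1`. -/
noncomputable def delta (a c : V) (hnadj : ¬ G.Adj a c) : RACG G →* Equiv.Perm ℤ :=
  PresentedGroup.toGroup (f := fun v => dgen a c v)
    (by
      rintro r (⟨v, rfl⟩ | ⟨u, v, hadj, rfl⟩)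
      · simp only [map_mul, FreeGroup.lift_apply_of]
        exact dgen_sq a c v
      · simp only [map_mul, FreeGroup.lift_apply_of]
        have hne : u ≠ v := hadj.ne
        by_cases hu : u = a
        · have hvc : v ≠ c := fun h => hnadj (hu ▸ h ▸ hadj)
          have hva : v ≠ a := fun h => hne (h.trans hu.symm).symm
          have : dgen a c v = 1 := by simp [dgen, hva, hvc]
          rw [this, mul_one, mul_one]
          exact dgen_sq a c u
        · by_cases hu2 : u = c
          · have hva : v ≠ a := fun h => hnadj (G.adj_symm (hu2 ▸ h ▸ hadj))
            have hvc : v ≠ c := fun h => hne (h.trans hu2.symm).symm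
            have : dgen a c v = 1 := by simp [dgen, hva, hvc]
            rw [this, mul_one, mul_one]
            exact dgen_sq a c u
          · have h1 : dgen a c u = 1 := by simp [dgen, hu, hu2]
            rw [h1]
            simpa using dgen_sq a c v)

lemma delta_gen (a c : V) (hnadj : ¬ G.Adj a c) (v : V) :
    delta G a c hnadj (racgGen G v) = dgen a c v :=
  PresentedGroup.toGroup.of _

/-- Generators of distinct non-adjacent letters do not commute. -/
lemma adj_of_gen_comm {u v : V} (hne : u ≠ v)
    (h : racgGen G u * racgGen G v = racgGen G v * racgGen G u) : G.Adj u v := by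
  by_contra hnadj
  have h2 := congrArg (delta G u v hnadj) h
  rw [map_mul, map_mul, delta_gen, delta_gen] at h2
  have hu : dgen u v u = alphaPerm := by simp [dgen]
  have hv : dgen u v v = betaPerm := by simp [dgen, Ne.symm hne]
  rw [hu, hv] at h2
  have := congrArg (fun p : Equiv.Perm ℤ => p 0) h2
  simp [Equiv.Perm.mul_apply] at this

lemma special_mono {S T : Set V} (h : S ⊆ T) :
    specialSubgroup G S ≤ specialSubgroup G T :=
  Subgroup.closure_mono (Set.image_mono h)

lemma prod_mem_special {S : Set V} {l : List V} (h : ∀ v ∈ l, v ∈ S) :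
    (l.map (racgGen G)).prod ∈ specialSubgroup G S := by
  induction l with
  | nil => simp [Subgroup.one_mem]
  | cons a l ih =>
      simp only [map_cons, prod_cons]
      exact Subgroup.mul_mem _
        (Subgroup.subset_closure ⟨a, h a mem_cons_self, rfl⟩)
        (ih fun v hv => h v (mem_cons_of_mem a hv))

lemma prod_reverse_eq_inv (l : List V) :
    ((l.reverse.map (racgGen G)).prod) = ((l.map (racgGen G)).prod)⁻¹ := by
  induction l with
  | nil => simp
  | cons a l ih =>
      rw [reverse_cons, map_append, prod_append, map_cons, prod_cons, ih]
      simp [gen_inv, mul_inv_rev]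

lemma exists_word_of_mem_special {S : Set V} {g : RACG G}
    (hg : g ∈ specialSubgroup G S) :
    ∃ l : List V, (∀ v ∈ l, v ∈ S) ∧ (l.map (racgGen G)).prod = g := by
  induction hg using Subgroup.closure_induction with
  | mem x hx =>
      obtain ⟨v, hv, rfl⟩ := hx
      exact ⟨[v], by simpa using hv, by simp⟩
  | one => exact ⟨[], by simp, by simp⟩
  | mul x y _ _ hx hy =>
      obtain ⟨l1, h1, rfl⟩ := hx
      obtain ⟨l2, h2, rfl⟩ := hy
      exact ⟨l1 ++ l2, by
        intro v hv
        rcases mem_append.mp hv with h | h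
        exacts [h1 v h, h2 v h], by simp⟩
  | inv x _ hx =>
      obtain ⟨l, h1, rfl⟩ := hx
      exact ⟨l.reverse, fun v hv => h1 v (mem_reverse.mp hv), prod_reverse_eq_inv G l⟩

end RacgAux
namespace RacgAux

open CoxeterSystem List
open scoped Classical

variable {V : Type*} (G : SimpleGraph V)

lemma zmod2_addfour' : ∀ e a b : ZMod 2, e + a + b + a + b = e := by decide

lemma gen_conj_cancel (i : V) (t : RACG G) :
    racgGen G i * (racgGen G i * t * racgGen G i) * racgGen G i = t := by
  rw [show racgGen G i * (racgGen G i * t * racgGen G i) * racgGen G i =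
    (racgGen G i * racgGen G i) * t * (racgGen G i * racgGen G i) by group,
    racgGen_sq, one_mul, mul_one]

lemma gen_conj_eq_iff (i : V) (t x : RACG G) :
    racgGen G i * t * racgGen G i = x ↔ t = racgGen G i * x * racgGen G i := by
  constructor
  · intro h
    rw [← h, gen_conj_cancel]
  · intro h
    rw [h, gen_conj_cancel]

/-- The building block of the reflection cocycle action. -/
noncomputable def phiGen (i : V) : Equiv.Perm (RACG G × ZMod 2) :=
  Function.Involutive.toPerm
    (fun p => (racgGen G i * p.1 * racgGen G i,
      p.2 + if p.1 = racgGen G i then 1 else 0))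
    (by
      intro p
      have h2 : (racgGen G i * p.1 * racgGen G i = racgGen G i) ↔ (p.1 = racgGen G i) := by
        rw [gen_conj_eq_iff, racgGen_sq, one_mul]
      show ((_, _) : RACG G × ZMod 2) = p
      rw [Prod.mk.injEq]
      refine ⟨gen_conj_cancel G i p.1, ?_⟩
      show p.2 + _ + _ = p.2
      rw [if_congr h2 rfl rfl]
      have he : ∀ e : ZMod 2, e + 1 + 1 = e := by decide
      by_cases h : p.1 = racgGen G i <;> simp [h] <;> exact he _)

lemma phiGen_apply (i : V) (p : RACG G × ZMod 2) :
    phiGen G i p = (racgGen G i * p.1 * racgGen G i,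
      p.2 + if p.1 = racgGen G i then 1 else 0) := rfl

lemma phiGen_sq (i : V) : phiGen G i * phiGen G i = 1 := by
  apply Equiv.ext
  intro p
  simp only [Equiv.Perm.mul_apply, Equiv.Perm.one_apply]
  exact Function.Involutive.toPerm_involutive _ p

/-- The reflection cocycle action. -/
noncomputable def phi : RACG G →* Equiv.Perm (RACG G × ZMod 2) :=
  PresentedGroup.toGroup (f := phiGen G)
    (by
      rintro r (⟨v, rfl⟩ | ⟨u, v, hadj, rfl⟩)
      · simp only [map_mul, FreeGroup.lift_apply_of]
        exact phiGen_sq G v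
      · simp only [map_mul, FreeGroup.lift_apply_of]
        have hcom := gen_comm_of_adj G hadj
        have h4 : racgGen G u * racgGen G v * racgGen G u * racgGen G v = 1 :=
          racgGen_comm G hadj
        have h4' : racgGen G v * racgGen G u * racgGen G v * racgGen G u = 1 :=
          racgGen_comm G hadj.symm
        have hvu : racgGen G v * racgGen G u * racgGen G v = racgGen G u := by
          rw [← hcom, mul_assoc, racgGen_sq, mul_one]
        have huv : racgGen G u * racgGen G v * racgGen G u = racgGen G v := by
          rw [hcom, mul_assoc, racgGen_sq, mul_one]
        have hvv : racgGen G v * racgGen G v * racgGen G v = racgGen G v := by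
          rw [racgGen_sq, one_mul]
        have huu : racgGen G u * racgGen G u * racgGen G u = racgGen G u := by
          rw [racgGen_sq, one_mul]
        have key : ∀ (t : RACG G) (ε : ZMod 2),
            phiGen G u (phiGen G v (phiGen G u (phiGen G v (t, ε)))) = (t, ε) := by
          intro t ε
          simp only [phiGen_apply]
          rw [Prod.mk.injEq]
          constructor
          · rw [show racgGen G u * (racgGen G v * (racgGen G u *
                (racgGen G v * t * racgGen G v) * racgGen G u) * racgGen G v) * racgGen G u =
              (racgGen G u * racgGen G v * racgGen G u * racgGen G v) * t *
                (racgGen G v * racgGen G u * racgGen G v * racgGen G u) from by group,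
              h4, h4', one_mul, mul_one]
          · have hc2 : (racgGen G v * t * racgGen G v = racgGen G u) ↔ (t = racgGen G u) := by
              rw [gen_conj_eq_iff, hvu]
            have hc3 : (racgGen G u * (racgGen G v * t * racgGen G v) * racgGen G u
                = racgGen G v) ↔ (t = racgGen G v) := by
              rw [gen_conj_eq_iff, huv, gen_conj_eq_iff, hvv]
            have hc4 : (racgGen G v * (racgGen G u * (racgGen G v * t * racgGen G v)
                * racgGen G u) * racgGen G v = racgGen G u) ↔ (t = racgGen G u) := by
              rw [gen_conj_eq_iff, hvu, gen_conj_eq_iff, huu, gen_conj_eq_iff, hvu]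
            rw [if_congr hc2 rfl rfl, if_congr hc3 rfl rfl, if_congr hc4 rfl rfl]
            exact zmod2_addfour' ε _ _
        apply Equiv.ext
        intro p
        obtain ⟨t, ε⟩ := p
        simp only [Equiv.Perm.mul_apply, Equiv.Perm.one_apply]
        exact key t ε)

lemma phi_gen (i : V) : phi G (racgGen G i) = phiGen G i :=
  PresentedGroup.toGroup.of _

end RacgAux
namespace RacgAux

open CoxeterSystem List
open scoped Classical

variable {V : Type*} (G : SimpleGraph V)

lemma phi_wordProd (ω : List V) (t : RACG G) (ε : ZMod 2) :
    phi G ((racgCS G).wordProd ω) (t, ε) =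
      ((racgCS G).wordProd ω * t * ((racgCS G).wordProd ω)⁻¹,
        ε + (((racgCS G).rightInvSeq ω).count t : ZMod 2)) := by
  induction ω with
  | nil => simp
  | cons i ω ih =>
      rw [wordProd_cons, map_mul, racgCS_simple, phi_gen]
      show phiGen G i (phi G ((racgCS G).wordProd ω) (t, ε)) = _
      rw [ih, phiGen_apply]
      dsimp only
      rw [show (racgCS G).rightInvSeq (i :: ω) =
        ((racgCS G).wordProd ω)⁻¹ * (racgCS G).simple i * (racgCS G).wordProd ω ::
          (racgCS G).rightInvSeq ω from rfl]
      rw [Prod.mk.injEq]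
      constructor
      · rw [mul_inv_rev, gen_inv]
        group
      · have hiff : ((racgCS G).wordProd ω * t * ((racgCS G).wordProd ω)⁻¹ = racgGen G i)
            ↔ (((racgCS G).wordProd ω)⁻¹ * racgGen G i * (racgCS G).wordProd ω = t) := by
          constructor
          · intro h
            rw [← h]
            group
          · intro h
            rw [← h]
            group
        simp only [count_cons, beq_iff_eq, Nat.cast_add, Nat.cast_ite, Nat.cast_one,
          Nat.cast_zero, racgCS_simple]
        rw [if_congr hiff rfl rfl]
        ring

lemma count_ris_mod2_eq {ω ω' : List V}
    (h : (racgCS G).wordProd ω = (racgCS G).wordProd ω') (t : RACG G) :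
    ((((racgCS G).rightInvSeq ω).count t : ZMod 2)) =
      (((racgCS G).rightInvSeq ω').count t : ZMod 2) := by
  have h1 := phi_wordProd G ω t 0
  have h2 := phi_wordProd G ω' t 0
  rw [h] at h1
  rw [h1] at h2
  have := (Prod.mk.injEq _ _ _ _).mp h2
  simpa using this.2

lemma right_descent_count_odd {w : RACG G} {i : V}
    (hi : (racgCS G).length (w * racgGen G i) < (racgCS G).length w)
    {ω : List V} (hω : (racgCS G).wordProd ω = w) :
    ((((racgCS G).rightInvSeq ω).count (racgGen G i) : ZMod 2)) = 1 := by
  set u := w * racgGen G i with hu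
  obtain ⟨ωu, hured, huprod⟩ := (racgCS G).exists_reduced_word' u
  have husi : u * racgGen G i = w := by
    rw [hu, mul_assoc, racgGen_sq, mul_one]
  have hnotmem : racgGen G i ∉ (racgCS G).rightInvSeq ωu := by
    intro hmem
    have := ((racgCS G).isRightInversion_of_mem_rightInvSeq hured hmem).2
    rw [← huprod, husi] at this
    omega
  have hcount0 : ((racgCS G).rightInvSeq ωu).count (racgGen G i) = 0 :=
    List.count_eq_zero.mpr hnotmem
  have hword : (racgCS G).wordProd (ωu ++ [i]) = w := by
    rw [wordProd_append, wordProd_singleton, racgCS_simple, ← huprod, husi]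
  have hcount1 : (((racgCS G).rightInvSeq (ωu ++ [i])).count (racgGen G i) : ZMod 2) = 1 := by
    rw [← concat_eq_append, rightInvSeq_concat]
    rw [concat_eq_append, count_append]
    have hconjinj : Function.Injective (MulAut.conj ((racgCS G).simple i)) :=
      (MulAut.conj ((racgCS G).simple i)).injective
    have : racgGen G i = (MulAut.conj ((racgCS G).simple i)) (racgGen G i) := by
      rw [racgCS_simple]
      show racgGen G i = racgGen G i * racgGen G i * (racgGen G i)⁻¹
      group
    rw [show (List.map (MulAut.conj ((racgCS G).simple i))
        ((racgCS G).rightInvSeq ωu)).count (racgGen G i) =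
        ((racgCS G).rightInvSeq ωu).count (racgGen G i) from by
      nth_rw 1 [this]
      exact List.count_map_of_injective _ _ hconjinj _]
    rw [hcount0]
    simp [racgCS_simple]
  rw [count_ris_mod2_eq G (hω.trans hword.symm) (racgGen G i), hcount1]

/-- The right exchange property. -/
lemma right_exchange {w : RACG G} {i : V}
    (hi : (racgCS G).length (w * racgGen G i) < (racgCS G).length w)
    {ω : List V} (hω : (racgCS G).wordProd ω = w) :
    ∃ j, ∃ hj : j < ω.length,
      w * racgGen G i = (racgCS G).wordProd (ω.eraseIdx j) ∧
      racgGen G i = ((racgCS G).wordProd (ω.drop (j + 1)))⁻¹ * racgGen G (ω.get ⟨j, hj⟩) *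
        (racgCS G).wordProd (ω.drop (j + 1)) := by
  have hodd := right_descent_count_odd G hi hω
  have hmem : racgGen G i ∈ (racgCS G).rightInvSeq ω := by
    by_contra hmem
    rw [List.count_eq_zero.mpr hmem] at hodd
    simp at hodd
  obtain ⟨⟨j, hj⟩, hget⟩ := List.get_of_mem hmem
  have hj' : j < ω.length := by
    have := (racgCS G).length_rightInvSeq ω
    omega
  refine ⟨j, hj', ?_, ?_⟩
  · have := (racgCS G).wordProd_mul_getD_rightInvSeq ω j
    rw [List.getD_eq_getElem _ _ hj] at this
    rw [← hω, ← this]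
    congr 1
    rw [← hget]
    rfl
  · have := (racgCS G).getD_rightInvSeq ω j
    rw [List.getD_eq_getElem _ _ hj] at this
    have hget' : ((racgCS G).rightInvSeq ω)[j] = racgGen G i := by rw [← hget]; rfl
    rw [hget'] at this
    rw [this]
    congr 2
    rw [List.getElem?_eq_getElem hj']
    simp [racgCS_simple]

/-- The left exchange property. -/
lemma left_exchange {w : RACG G} {i : V}
    (hi : (racgCS G).length (racgGen G i * w) < (racgCS G).length w)
    {ω : List V} (hω : (racgCS G).wordProd ω = w) :
    ∃ j, ∃ hj : j < ω.length,
      racgGen G i * w = (racgCS G).wordProd (ω.eraseIdx j) ∧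
      racgGen G i = (racgCS G).wordProd (ω.take j) * racgGen G (ω.get ⟨j, hj⟩) *
        ((racgCS G).wordProd (ω.take j))⁻¹ := by
  have hinv : (racgCS G).length (w⁻¹ * racgGen G i) < (racgCS G).length w⁻¹ := by
    rw [(racgCS G).length_inv]
    calc (racgCS G).length (w⁻¹ * racgGen G i)
        = (racgCS G).length (w⁻¹ * racgGen G i)⁻¹ := ((racgCS G).length_inv _).symm
      _ = (racgCS G).length (racgGen G i * w) := by rw [mul_inv_rev, inv_inv, gen_inv]
      _ < (racgCS G).length w := hi
  have hωrev : (racgCS G).wordProd ω.reverse = w⁻¹ := by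
    rw [wordProd_reverse, hω]
  have hodd := right_descent_count_odd G hinv hωrev
  rw [rightInvSeq_reverse, count_reverse] at hodd
  have hmem : racgGen G i ∈ (racgCS G).leftInvSeq ω := by
    by_contra hmem
    rw [List.count_eq_zero.mpr hmem] at hodd
    simp at hodd
  obtain ⟨⟨j, hj⟩, hget⟩ := List.get_of_mem hmem
  have hj' : j < ω.length := by
    have := (racgCS G).length_leftInvSeq ω
    omega
  refine ⟨j, hj', ?_, ?_⟩
  · have := (racgCS G).getD_leftInvSeq_mul_wordProd ω j
    rw [List.getD_eq_getElem _ _ hj] at this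
    rw [← hω, ← this]
    congr 1
    rw [← hget]
    rfl
  · have := (racgCS G).getD_leftInvSeq ω j
    rw [List.getD_eq_getElem _ _ hj] at this
    have hget' : ((racgCS G).leftInvSeq ω)[j] = racgGen G i := by rw [← hget]; rfl
    rw [hget'] at this
    rw [this]
    congr 2
    rw [List.getElem?_eq_getElem hj']
    simp [racgCS_simple]

end RacgAux
namespace RacgAux

open CoxeterSystem List
open scoped Classical

variable {V : Type*} (G : SimpleGraph V)

lemma exists_reduced_sublist : ∀ (n : ℕ) (ω : List V), ω.length ≤ n →
    ∃ ω' : List V, ω'.Sublist ω ∧ (racgCS G).IsReduced ω' ∧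
      (racgCS G).wordProd ω' = (racgCS G).wordProd ω := by
  intro n
  induction n with
  | zero =>
      intro ω hω
      rw [Nat.le_zero, List.length_eq_zero_iff] at hω
      subst hω
      refine ⟨[], Sublist.refl _, ?_, rfl⟩
      show (racgCS G).length ((racgCS G).wordProd []) = ([] : List V).length
      simp
  | succ n ih =>
      intro ω hω
      by_cases hred : (racgCS G).IsReduced ω
      · exact ⟨ω, Sublist.refl _, hred, rfl⟩
      have hex : ∃ k, ¬ (racgCS G).IsReduced (ω.take k) := by
        refine ⟨ω.length, ?_⟩
        rwa [List.take_length]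
      set m₀ := Nat.find hex with hm₀
      have hP : ¬ (racgCS G).IsReduced (ω.take m₀) := Nat.find_spec hex
      have hm₀pos : m₀ ≠ 0 := by
        intro h
        rw [h] at hP
        apply hP
        show (racgCS G).length ((racgCS G).wordProd (ω.take 0)) = (ω.take 0).length
        simp
      set m := m₀ - 1 with hm
      have hmlt : m < m₀ := by omega
      have hAred : (racgCS G).IsReduced (ω.take m) := by
        by_contra h
        exact Nat.find_min hex hmlt h
      have hmlen : m < ω.length := by
        by_contra h
        push_neg at h
        rw [List.take_of_length_le h] at hAred
        exact hred hAred
      have hm₀m : m₀ = m + 1 := by omega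
      set b := ω.get ⟨m, hmlen⟩ with hb
      have htake : ω.take (m + 1) = ω.take m ++ [b] := by
        rw [List.take_succ, List.getElem?_eq_getElem hmlen]
        rfl
      have hlentake : (ω.take m).length = m := by
        rw [List.length_take]
        omega
      have hlA : (racgCS G).length ((racgCS G).wordProd (ω.take m)) = m := by
        have h := hAred
        rw [CoxeterSystem.IsReduced, hlentake] at h
        exact h
      have hdesc : (racgCS G).length ((racgCS G).wordProd (ω.take m) * racgGen G b) <
          (racgCS G).length ((racgCS G).wordProd (ω.take m)) := by
        have hprodsucc : (racgCS G).wordProd (ω.take (m+1)) =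
            (racgCS G).wordProd (ω.take m) * racgGen G b := by
          rw [htake, wordProd_append, wordProd_singleton, racgCS_simple]
        have hne : (racgCS G).length ((racgCS G).wordProd (ω.take (m+1))) ≠ m + 1 := by
          intro h
          apply hP
          rw [hm₀m]
          show (racgCS G).length ((racgCS G).wordProd (ω.take (m+1))) = (ω.take (m+1)).length
          rw [h, List.length_take]
          omega
        have hdich := (racgCS G).length_mul_simple ((racgCS G).wordProd (ω.take m)) b
        rw [racgCS_simple, hlA] at hdich
        rw [hlA]
        rcases hdich with h | h
        · exact absurd (by rw [hprodsucc]; exact h) hne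
        · omega
      obtain ⟨j, hj, heq, _⟩ := right_exchange G hdesc (rfl :
        (racgCS G).wordProd (ω.take m) = (racgCS G).wordProd (ω.take m))
      set ω₂ := (ω.take m).eraseIdx j ++ ω.drop (m+1) with hω₂
      have hprod2 : (racgCS G).wordProd ω₂ = (racgCS G).wordProd ω := by
        rw [hω₂, wordProd_append, ← heq]
        conv_rhs => rw [← List.take_append_drop (m+1) ω]
        rw [wordProd_append, htake, wordProd_append, wordProd_singleton, racgCS_simple]
      have hsub : ω₂.Sublist ω := by
        conv_rhs => rw [← List.take_append_drop (m+1) ω]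
        apply Sublist.append _ (Sublist.refl _)
        calc (ω.take m).eraseIdx j <+ ω.take m := List.eraseIdx_sublist _ _
          _ = (ω.take (m+1)).take m := by rw [List.take_take]; congr 1; omega
          _ <+ ω.take (m+1) := List.take_sublist _ _
      have hlen2 : ω₂.length ≤ n := by
        have h1 := List.length_eraseIdx_add_one (show j < (ω.take m).length from hj)
        have h2 : (ω.drop (m+1)).length = ω.length - (m+1) := List.length_drop
        rw [hω₂, List.length_append]
        omega
      obtain ⟨ω', hsub', hred', hprod'⟩ := ih ω₂ hlen2
      exact ⟨ω', hsub'.trans hsub, hred', by rw [hprod', hprod2]⟩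

lemma exists_reduced_word_subset {S : Set V} {g : RACG G}
    (hg : g ∈ specialSubgroup G S) :
    ∃ ω : List V, (racgCS G).IsReduced ω ∧ (∀ v ∈ ω, v ∈ S) ∧
      (racgCS G).wordProd ω = g := by
  obtain ⟨l, hl, hprod⟩ := exists_word_of_mem_special G hg
  obtain ⟨ω, hsub, hred, hprodeq⟩ := exists_reduced_sublist G l.length l le_rfl
  refine ⟨ω, hred, fun v hv => hl v (hsub.subset hv), ?_⟩
  rw [hprodeq, racgCS_wordProd, hprod]

lemma wordProd_mem_special {S : Set V} {l : List V} (h : ∀ v ∈ l, v ∈ S) :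
    (racgCS G).wordProd l ∈ specialSubgroup G S := by
  rw [racgCS_wordProd]
  exact prod_mem_special G h

/-- Length additivity for minimal coset representatives (right version). -/
lemma length_coset_right {T : Set V} : ∀ (n : ℕ) (w : RACG G), (racgCS G).length w = n →
    (∀ b ∈ T, ¬ (racgCS G).length (w * racgGen G b) < (racgCS G).length w) →
    ∀ ν : List V, (∀ v ∈ ν, v ∈ T) → (racgCS G).IsReduced ν →
    (racgCS G).length (w * (racgCS G).wordProd ν) = (racgCS G).length w + ν.length := by
  intro n
  induction n using Nat.strong_induction_on with
  | _ n ih =>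
    intro w hwn hw ν hνT hνred
    rcases Nat.eq_zero_or_pos n with hn0 | hnpos
    · have hw1 : w = 1 := by
        rw [← (racgCS G).length_eq_zero_iff]
        omega
      rw [hw1, one_mul, hνred]
      simp
    -- w ≠ 1
    have hwne : w ≠ 1 := by
      intro h
      rw [h, (racgCS G).length_one] at hwn
      omega
    obtain ⟨c, hc⟩ := (racgCS G).exists_leftDescent_of_ne_one hwne
    rw [CoxeterSystem.IsLeftDescent] at hc
    obtain ⟨w₂, hw₂⟩ : ∃ w₂, w₂ = (racgCS G).simple c * w := ⟨_, rfl⟩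
    have hcw : (racgCS G).simple c * w₂ = w := by
      rw [hw₂, ← mul_assoc, simple_mul_simple_self, one_mul]
    have hlw₂ : (racgCS G).length w₂ = n - 1 := by
      have hdich := (racgCS G).length_simple_mul w c
      rw [hw₂]
      rcases hdich with h | h <;> omega
    have hw₂T : ∀ b ∈ T, ¬ (racgCS G).length (w₂ * racgGen G b) < (racgCS G).length w₂ := by
      intro b hb hlt
      apply hw b hb
      have h1 : (racgCS G).length (w * racgGen G b) ≤ (racgCS G).length (w₂ * racgGen G b) + 1 := by
        calc (racgCS G).length (w * racgGen G b)
            = (racgCS G).length ((racgCS G).simple c * (w₂ * racgGen G b)) := by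
              rw [← hcw]; group
          _ ≤ (racgCS G).length ((racgCS G).simple c) + (racgCS G).length (w₂ * racgGen G b) :=
              (racgCS G).length_mul_le _ _
          _ = (racgCS G).length (w₂ * racgGen G b) + 1 := by
              rw [(racgCS G).length_simple]; omega
      rw [hwn]
      omega
    have hIH := ih (n-1) (by omega) w₂ hlw₂ hw₂T
    have hlen2 : (racgCS G).length (w₂ * (racgCS G).wordProd ν) =
        (racgCS G).length w₂ + ν.length := hIH ν hνT hνred
    -- now show that multiplying by (s c) on the left increases length
    have hdich := (racgCS G).length_simple_mul (w₂ * (racgCS G).wordProd ν) c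
    rcases hdich with h | h
    · rw [← mul_assoc, hcw] at h
      rw [h, hlen2, hlw₂, hwn]
      omega
    exfalso
    -- c is a left descent of w₂ * π ν
    obtain ⟨κ₂, hκ₂len, hκ₂prod⟩ := exists_reduced_word_old G w₂
    have hκ₂red : (racgCS G).IsReduced κ₂ := by
      show (racgCS G).length ((racgCS G).wordProd κ₂) = κ₂.length
      rw [← hκ₂prod, hκ₂len]
    have happred : (racgCS G).IsReduced (κ₂ ++ ν) := by
      show (racgCS G).length ((racgCS G).wordProd (κ₂ ++ ν)) = (κ₂ ++ ν).length
      rw [wordProd_append, ← hκ₂prod, hlen2, List.length_append, hκ₂len]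
    have happrod : (racgCS G).wordProd (κ₂ ++ ν) = w₂ * (racgCS G).wordProd ν := by
      rw [wordProd_append, hκ₂prod]
    have hdesc : (racgCS G).length (racgGen G c * (w₂ * (racgCS G).wordProd ν)) <
        (racgCS G).length (w₂ * (racgCS G).wordProd ν) := by
      rw [← racgCS_simple]
      have hlef : (racgCS G).length ((racgCS G).simple c * (w₂ * (racgCS G).wordProd ν)) =
          (racgCS G).length (w₂ * (racgCS G).wordProd ν) - 1 := by omega
      omega
    obtain ⟨j, hj, heq, _⟩ := left_exchange G hdesc happrod
    rcases lt_or_ge j κ₂.length with hjκ | hjκ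
    · -- contradiction with length of w
      rw [List.eraseIdx_append_of_lt_length hjκ, wordProd_append] at heq
      have hcancel : racgGen G c * w₂ = (racgCS G).wordProd (κ₂.eraseIdx j) := by
        have := heq
        rw [← mul_assoc] at this
        exact mul_right_cancel this
      have : w = (racgCS G).wordProd (κ₂.eraseIdx j) := by
        rw [← hcancel, ← racgCS_simple, hcw]
      have hle := (racgCS G).length_wordProd_le (κ₂.eraseIdx j)
      rw [← this] at hle
      have : (κ₂.eraseIdx j).length ≤ κ₂.length - 1 := by
        rcases Nat.eq_zero_or_pos κ₂.length with h0 | hpos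
        · rw [List.length_eq_zero_iff] at h0
          subst h0
          simp at hjκ
        · have := List.length_eraseIdx_add_one (show j < κ₂.length by omega)
          omega
      rw [hwn] at hle
      rw [hκ₂len, hlw₂] at this
      omega
    · -- v₄ case
      rw [List.eraseIdx_append_of_length_le hjκ, wordProd_append, ← hκ₂prod] at heq
      set v₄ := (racgCS G).wordProd (ν.eraseIdx (j - κ₂.length)) * ((racgCS G).wordProd ν)⁻¹
        with hv₄
      have hwv₄ : w = w₂ * v₄ := by
        have h1 : racgGen G c * (w₂ * (racgCS G).wordProd ν) =
            w₂ * (racgCS G).wordProd (ν.eraseIdx (j - κ₂.length)) := heq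
        have h2 : w * (racgCS G).wordProd ν =
            w₂ * (racgCS G).wordProd (ν.eraseIdx (j - κ₂.length)) := by
          rw [← h1, ← racgCS_simple, ← mul_assoc, hcw]
        rw [hv₄, ← mul_assoc, ← h2]
        group
      have hv₄mem : v₄ ∈ specialSubgroup G T := by
        rw [hv₄]
        apply Subgroup.mul_mem
        · exact wordProd_mem_special G
            (fun v hv => hνT v ((List.eraseIdx_sublist ν _).subset hv))
        · exact Subgroup.inv_mem _ (wordProd_mem_special G hνT)
      have hv₄ne : v₄ ≠ 1 := by
        intro h
        rw [h, mul_one] at hwv₄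
        rw [hwv₄, hlw₂] at hwn
        omega
      obtain ⟨ρ, hρred, hρT, hρprod⟩ := exists_reduced_word_subset G hv₄mem
      have hρne : ρ ≠ [] := by
        intro h
        rw [h] at hρprod
        exact hv₄ne (by rw [← hρprod]; simp)
      have hlenρ : (racgCS G).length (w₂ * (racgCS G).wordProd ρ) =
          (racgCS G).length w₂ + ρ.length := hIH ρ hρT hρred
      rw [hρprod, ← hwv₄, hwn, hlw₂] at hlenρ
      have hρ1 : ρ.length = 1 := by omega
      obtain ⟨d, rfl⟩ := List.length_eq_one_iff.mp hρ1
      have hdT : d ∈ T := hρT d (by simp)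
      have hv₄d : v₄ = racgGen G d := by
        rw [← hρprod, wordProd_singleton, racgCS_simple]
      apply hw d hdT
      have : w * racgGen G d = w₂ := by
        rw [hwv₄, hv₄d, mul_assoc, racgGen_sq, mul_one]
      rw [this, hlw₂, hwn]
      omega

/-- Length additivity for minimal coset representatives (left version). -/
lemma length_coset_left {T : Set V} {w : RACG G}
    (hw : ∀ b ∈ T, ¬ (racgCS G).length (racgGen G b * w) < (racgCS G).length w)
    {μ : List V} (hμT : ∀ v ∈ μ, v ∈ T) (hμred : (racgCS G).IsReduced μ) :
    (racgCS G).length ((racgCS G).wordProd μ * w) = μ.length + (racgCS G).length w := by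
  have hw' : ∀ b ∈ T, ¬ (racgCS G).length (w⁻¹ * racgGen G b) < (racgCS G).length w⁻¹ := by
    intro b hb h
    apply hw b hb
    rw [(racgCS G).length_inv] at h
    calc (racgCS G).length (racgGen G b * w)
        = (racgCS G).length (racgGen G b * w)⁻¹ := ((racgCS G).length_inv _).symm
      _ = (racgCS G).length (w⁻¹ * racgGen G b) := by rw [mul_inv_rev, gen_inv]
      _ < (racgCS G).length w := h
  have h1 := length_coset_right G ((racgCS G).length w⁻¹) w⁻¹ rfl hw' μ.reverse
    (fun v hv => hμT v (List.mem_reverse.mp hv))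
    (((racgCS G).isReduced_reverse_iff μ).mpr hμred)
  rw [wordProd_reverse, (racgCS G).length_inv, List.length_reverse] at h1
  calc (racgCS G).length ((racgCS G).wordProd μ * w)
      = (racgCS G).length ((racgCS G).wordProd μ * w)⁻¹ := ((racgCS G).length_inv _).symm
    _ = (racgCS G).length (w⁻¹ * ((racgCS G).wordProd μ)⁻¹) := by rw [mul_inv_rev]
    _ = μ.length + (racgCS G).length w := by rw [h1]; omega

end RacgAux
namespace RacgAux

open CoxeterSystem List
open scoped Classical

variable {V : Type*} (G : SimpleGraph V)

lemma isReduced_chain' : ∀ {ω : List V}, (racgCS G).IsReduced ω → ω.IsChain (· ≠ ·) := by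
  intro ω
  induction ω with
  | nil => intro _; simp
  | cons x t ih =>
      intro hred
      match t, ih with
      | [], _ => simp
      | y :: t', ih =>
        rw [List.isChain_cons_cons]
        have htail : (racgCS G).IsReduced (y :: t') := by
          have := hred.drop 1
          simpa using this
        refine ⟨?_, ih htail⟩
        intro hxy
        subst hxy
        have : (racgCS G).wordProd (x :: x :: t') = (racgCS G).wordProd t' := by
          rw [wordProd_cons, wordProd_cons, simple_mul_simple_cancel_left]
        have hle := (racgCS G).length_wordProd_le t'
        rw [← this, hred] at hle
        simp at hle

section Dihedral

variable (a c : V) (hnadj : ¬ G.Adj a c)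

lemma delta_bound : ∀ (l : List V),
    ((delta G a c hnadj ((racgCS G).wordProd l)) 0).natAbs ≤ l.length := by
  intro l
  induction l with
  | nil => simp
  | cons x t ih =>
      rw [wordProd_cons, map_mul, racgCS_simple, delta_gen]
      rw [List.length_cons]
      have happ : ((dgen a c x * delta G a c hnadj ((racgCS G).wordProd t)) 0) =
          (dgen a c x) ((delta G a c hnadj ((racgCS G).wordProd t)) 0) :=
        Equiv.Perm.mul_apply _ _ _
      rw [happ]
      set v := (delta G a c hnadj ((racgCS G).wordProd t)) 0 with hv
      unfold dgen
      split_ifs with h1 h2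
      · simp only [alphaPerm_apply]
        omega
      · simp only [betaPerm_apply]
        omega
      · simp only [Equiv.Perm.one_apply]
        omega

lemma delta_alt_value (hne : a ≠ c) : ∀ (ξ : List V), ξ ≠ [] →
    (∀ v ∈ ξ, v = a ∨ v = c) → ξ.IsChain (· ≠ ·) →
    (delta G a c hnadj ((racgCS G).wordProd ξ)) 0 =
      if ξ.head? = some a then -(ξ.length : ℤ) else (ξ.length : ℤ) := by
  intro ξ
  induction ξ with
  | nil => intro h; exact absurd rfl h
  | cons x t ih =>
      intro _ hmem hchain
      have hx := hmem x (List.mem_cons_self)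
      cases t with
      | nil =>
          rw [wordProd_singleton, racgCS_simple, delta_gen]
          rcases hx with h | h
          · rw [h]
            simp [dgen]
          · rw [h]
            have hba : dgen a c c = betaPerm := by simp [dgen, Ne.symm hne]
            rw [hba]
            simp [Ne.symm hne]
      | cons y t' =>
          have hychain := (List.isChain_cons_cons.mp hchain).2
          have hxy := (List.isChain_cons_cons.mp hchain).1
          have hyval := ih (by simp) (fun v hv => hmem v (List.mem_cons_of_mem x hv)) hychain
          rw [wordProd_cons, map_mul, racgCS_simple, delta_gen]
          have happ : ((dgen a c x * delta G a c hnadj ((racgCS G).wordProd (y :: t'))) 0) =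
              (dgen a c x) ((delta G a c hnadj ((racgCS G).wordProd (y :: t'))) 0) :=
            Equiv.Perm.mul_apply _ _ _
          rw [happ, hyval]
          have hy := hmem y (List.mem_cons_of_mem x (List.mem_cons_self))
          rcases hx with hxa | hxc
          · -- x = a, so y = c
            have hyc : y = c := by
              rcases hy with h | h
              · exact absurd (hxa.trans h.symm) hxy
              · exact h
            have hygoal : ¬ ((y :: t').head? = some a) := by
              simp only [List.head?_cons, Option.some.injEq]
              rw [hyc]
              exact Ne.symm hne
            rw [if_neg hygoal]
            have hda : dgen a c x = alphaPerm := by simp [dgen, hxa]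
            rw [hda]
            simp only [alphaPerm_apply, List.head?_cons, List.length_cons]
            simp only [hxa, ↓reduceIte]
            push_cast
            ring
          · -- x = c, so y = a
            have hya : y = a := by
              rcases hy with h | h
              · exact h
              · exact absurd (hxc.trans h.symm) hxy
            have hygoal : ((y :: t').head? = some a) := by simp [hya]
            rw [if_pos hygoal]
            have hdb : dgen a c x = betaPerm := by simp [dgen, hxc, Ne.symm hne]
            rw [hdb]
            simp only [betaPerm_apply, List.head?_cons, List.length_cons]
            simp only [hxc, Option.some.injEq, Ne.symm hne, ↓reduceIte]
            push_cast
            ring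

end Dihedral

lemma alt_length (a c : V) (hnadj : ¬ G.Adj a c) (hne : a ≠ c) (ξ : List V)
    (hmem : ∀ v ∈ ξ, v = a ∨ v = c) (hchain : ξ.IsChain (· ≠ ·)) :
    (racgCS G).length ((racgCS G).wordProd ξ) = ξ.length := by
  apply _root_.le_antisymm ((racgCS G).length_wordProd_le ξ)
  rcases List.eq_nil_or_concat ξ with rfl | ⟨_, _, _⟩
  · simp
  have hξne : ξ ≠ [] := by
    rename_i h
    obtain ⟨l, b, rfl⟩ := h
    simp
  obtain ⟨ω, hωlen, hωprod⟩ := exists_reduced_word_old G ((racgCS G).wordProd ξ)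
  have hb := delta_bound G a c hnadj ω
  rw [← hωprod] at hb
  rw [delta_alt_value G a c hnadj hne ξ hξne hmem hchain] at hb
  rw [hωlen] at hb
  split_ifs at hb <;> simp at hb <;> omega

/-- Stripping left descents in `S`. -/
lemma strip_left (S : Set V) : ∀ (n : ℕ) (z : RACG G), (racgCS G).length z = n →
    ∃ (η : List V) (z₀ : RACG G), (∀ v ∈ η, v ∈ S) ∧ z = (racgCS G).wordProd η * z₀ ∧
      (racgCS G).length z = η.length + (racgCS G).length z₀ ∧
      ∀ b ∈ S, ¬ (racgCS G).length (racgGen G b * z₀) < (racgCS G).length z₀ := by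
  intro n
  induction n using Nat.strong_induction_on with
  | _ n ih =>
    intro z hzn
    by_cases hdesc : ∃ b ∈ S, (racgCS G).length (racgGen G b * z) < (racgCS G).length z
    · obtain ⟨b, hbS, hb⟩ := hdesc
      obtain ⟨z₁, hz₁⟩ : ∃ z₁, z₁ = racgGen G b * z := ⟨_, rfl⟩
      have hlz₁ : (racgCS G).length z₁ + 1 = n := by
        have hdich := (racgCS G).length_simple_mul z b
        rw [racgCS_simple] at hdich
        rw [hz₁]
        rcases hdich with h | h <;> omega
      obtain ⟨η, z₀, hη, hprod, hlen, hnod⟩ := ih ((racgCS G).length z₁) (by omega) z₁ rfl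
      refine ⟨b :: η, z₀, ?_, ?_, ?_, hnod⟩
      · intro v hv
        rcases List.mem_cons.mp hv with rfl | hv
        · exact hbS
        · exact hη v hv
      · rw [wordProd_cons, racgCS_simple, mul_assoc, ← hprod, hz₁,
          ← mul_assoc, racgGen_sq, one_mul]
      · rw [List.length_cons, hzn]
        omega
    · push_neg at hdesc
      exact ⟨[], z, by simp, by rw [wordProd_nil, one_mul], by simp,
        fun b hb => not_lt.mpr (hdesc b hb)⟩

/-- Two distinct left descents are adjacent. -/
lemma adj_of_two_left_descents {z : RACG G} {a c : V} (hne : a ≠ c)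
    (ha : (racgCS G).length (racgGen G a * z) < (racgCS G).length z)
    (hc : (racgCS G).length (racgGen G c * z) < (racgCS G).length z) :
    G.Adj a c := by
  by_contra hnadj
  set S : Set V := {a, c} with hS
  obtain ⟨η, z₀, hη, hprod, hlen, hnod⟩ := strip_left G S ((racgCS G).length z) z rfl
  have hdmem : (racgCS G).wordProd η ∈ specialSubgroup G S := wordProd_mem_special G hη
  obtain ⟨η', hη'red, hη'S, hη'prod⟩ := exists_reduced_word_subset G hdmem
  have hη'mem : ∀ v ∈ η', v = a ∨ v = c := by
    intro v hv
    have := hη'S v hv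
    rcases this with h | h
    · exact Or.inl h
    · exact Or.inr h
  have hlz : (racgCS G).length z = η'.length + (racgCS G).length z₀ := by
    have h1 := length_coset_left G hnod hη'S hη'red
    rw [hη'prod] at h1
    rw [hprod, h1]
  cases η' with
  | nil =>
      have : z = z₀ := by
        rw [hprod, ← hη'prod, wordProd_nil, one_mul]
      rw [this] at ha
      exact hnod a (Or.inl rfl) ha
  | cons x₀ rest =>
      have hx₀ := hη'mem x₀ (List.mem_cons_self)
      have hchain := isReduced_chain' G hη'red
      rcases hx₀ with hx₀a | hx₀c
      · -- head is a; use descent c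
        have hmc : ∀ v ∈ (c :: x₀ :: rest), v = a ∨ v = c := by
          intro v hv
          rcases List.mem_cons.mp hv with rfl | hv
          · exact Or.inr rfl
          · exact hη'mem v hv
        have hchainc : (c :: x₀ :: rest).IsChain (· ≠ ·) :=
          List.isChain_cons_cons.mpr ⟨by rw [hx₀a]; exact Ne.symm hne, hchain⟩
        have haltc := alt_length G a c hnadj hne (c :: x₀ :: rest) hmc hchainc
        have hredc : (racgCS G).IsReduced (c :: x₀ :: rest) := haltc
        have h2 := length_coset_left G hnod (μ := c :: x₀ :: rest)
          (fun v hv => by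
            rcases hmc v hv with rfl | rfl
            · exact Or.inl rfl
            · exact Or.inr rfl) hredc
        have h3 : (racgCS G).wordProd (c :: x₀ :: rest) * z₀ = racgGen G c * z := by
          rw [wordProd_cons, racgCS_simple, mul_assoc, hη'prod, ← hprod]
        rw [h3] at h2
        rw [h2, List.length_cons] at hc
        omega
      · -- head is c; use descent a
        have hma : ∀ v ∈ (a :: x₀ :: rest), v = a ∨ v = c := by
          intro v hv
          rcases List.mem_cons.mp hv with rfl | hv
          · exact Or.inl rfl
          · exact hη'mem v hv
        have hchaina : (a :: x₀ :: rest).IsChain (· ≠ ·) :=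
          List.isChain_cons_cons.mpr ⟨by rw [hx₀c]; exact hne, hchain⟩
        have halta := alt_length G a c hnadj hne (a :: x₀ :: rest) hma hchaina
        have hreda : (racgCS G).IsReduced (a :: x₀ :: rest) := halta
        have h2 := length_coset_left G hnod (μ := a :: x₀ :: rest)
          (fun v hv => by
            rcases hma v hv with rfl | rfl
            · exact Or.inl rfl
            · exact Or.inr rfl) hreda
        have h3 : (racgCS G).wordProd (a :: x₀ :: rest) * z₀ = racgGen G a * z := by
          rw [wordProd_cons, racgCS_simple, mul_assoc, hη'prod, ← hprod]
        rw [h3] at h2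
        rw [h2, List.length_cons] at ha
        omega

end RacgAux
namespace RacgAux

open CoxeterSystem List
open scoped Classical

variable {V : Type*} (G : SimpleGraph V)

/-- If `w` commutes with a generator `a` which is not a right descent, then `w` has a
reduced word all of whose letters are adjacent to `a`. -/
lemma exists_adj_word : ∀ (n : ℕ) (w : RACG G) (a : V), (racgCS G).length w = n →
    racgGen G a * w = w * racgGen G a →
    (racgCS G).length (w * racgGen G a) = (racgCS G).length w + 1 →
    ∃ κ : List V, (racgCS G).IsReduced κ ∧ (racgCS G).wordProd κ = w ∧
      ∀ k ∈ κ, G.Adj k a := by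
  intro n
  induction n using Nat.strong_induction_on with
  | _ n ih =>
    intro w a hwn hcomm hlen
    rcases eq_or_ne w 1 with rfl | hwne
    · refine ⟨[], ?_, (racgCS G).wordProd_nil, by simp⟩
      show (racgCS G).length ((racgCS G).wordProd []) = ([] : List V).length
      simp
    obtain ⟨c, hc⟩ := (racgCS G).exists_leftDescent_of_ne_one hwne
    have hc' : (racgCS G).length (racgGen G c * w) < (racgCS G).length w := by
      rw [← racgCS_simple]
      exact hc
    have hca : c ≠ a := by
      intro h
      rw [h, hcomm, hlen] at hc'
      omega
    have hza : (racgCS G).length (racgGen G a * (w * racgGen G a)) <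
        (racgCS G).length (w * racgGen G a) := by
      have h1 : racgGen G a * (w * racgGen G a) = w := by
        rw [← hcomm, ← mul_assoc, racgGen_sq, one_mul]
      rw [h1, hlen]
      omega
    have hzc : (racgCS G).length (racgGen G c * (w * racgGen G a)) <
        (racgCS G).length (w * racgGen G a) := by
      have h1 : (racgCS G).length (racgGen G c * (w * racgGen G a)) ≤
          (racgCS G).length (racgGen G c * w) + 1 := by
        calc (racgCS G).length (racgGen G c * (w * racgGen G a))
            = (racgCS G).length ((racgGen G c * w) * racgGen G a) := by rw [mul_assoc]
          _ ≤ (racgCS G).length (racgGen G c * w) +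
              (racgCS G).length (racgGen G a) := (racgCS G).length_mul_le _ _
          _ = (racgCS G).length (racgGen G c * w) + 1 := by
              rw [← racgCS_simple G a, (racgCS G).length_simple]
      rw [hlen]
      omega
    have hadj : G.Adj a c := adj_of_two_left_descents G (Ne.symm hca) hza hzc
    obtain ⟨w₂, hw₂⟩ : ∃ w₂, w₂ = racgGen G c * w := ⟨_, rfl⟩
    have hcw : racgGen G c * w₂ = w := by
      rw [hw₂, ← mul_assoc, racgGen_sq, one_mul]
    have hlw₂ : (racgCS G).length w₂ + 1 = n := by
      have hdich := (racgCS G).length_simple_mul w c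
      rw [racgCS_simple] at hdich
      rw [hw₂]
      rcases hdich with h | h <;> omega
    have hcomm₂ : racgGen G a * w₂ = w₂ * racgGen G a := by
      rw [hw₂]
      calc racgGen G a * (racgGen G c * w)
          = (racgGen G a * racgGen G c) * w := by rw [mul_assoc]
        _ = (racgGen G c * racgGen G a) * w := by rw [gen_comm_of_adj G hadj]
        _ = racgGen G c * (racgGen G a * w) := by rw [mul_assoc]
        _ = racgGen G c * (w * racgGen G a) := by rw [hcomm]
        _ = racgGen G c * w * racgGen G a := by rw [mul_assoc]
    have hlen₂ : (racgCS G).length (w₂ * racgGen G a) = (racgCS G).length w₂ + 1 := by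
      have hdich := (racgCS G).length_mul_simple w₂ a
      rw [racgCS_simple] at hdich
      rcases hdich with h | h
      · exact h
      · exfalso
        have h1 : w * racgGen G a = racgGen G c * (w₂ * racgGen G a) := by
          rw [← hcw, mul_assoc]
        have h2 : (racgCS G).length (w * racgGen G a) ≤
            (racgCS G).length (w₂ * racgGen G a) + 1 := by
          rw [h1]
          calc (racgCS G).length (racgGen G c * (w₂ * racgGen G a))
              ≤ (racgCS G).length (racgGen G c) +
                (racgCS G).length (w₂ * racgGen G a) := (racgCS G).length_mul_le _ _
            _ = (racgCS G).length (w₂ * racgGen G a) + 1 := by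
                rw [← racgCS_simple G c, (racgCS G).length_simple]; omega
        rw [hlen, hwn] at h2
        omega
    obtain ⟨κ₂, hκ₂red, hκ₂prod, hκ₂adj⟩ :=
      ih ((racgCS G).length w₂) (by omega) w₂ a rfl hcomm₂ hlen₂
    have hκ₂len : κ₂.length = (racgCS G).length w₂ := by
      have h5 : (racgCS G).length ((racgCS G).wordProd κ₂) = κ₂.length := hκ₂red
      rw [hκ₂prod] at h5
      omega
    refine ⟨c :: κ₂, ?_, ?_, ?_⟩
    · show (racgCS G).length ((racgCS G).wordProd (c :: κ₂)) = (c :: κ₂).length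
      rw [wordProd_cons, racgCS_simple, hκ₂prod, hcw, hwn, List.length_cons]
      omega
    · rw [wordProd_cons, racgCS_simple, hκ₂prod, hcw]
    · intro k hk
      rcases List.mem_cons.mp hk with rfl | hk'
      · exact hadj.symm
      · exact hκ₂adj k hk'

/-- The key induction: letters of `μ` commute with `w`. -/
lemma commute_of_conj (Λ T : Set V) (hΛT : Λ ⊆ T) (w : RACG G)
    (hwstart : ∀ b ∈ Λ, ¬ (racgCS G).length (racgGen G b * w) < (racgCS G).length w)
    (hwend : ∀ b ∈ T, ¬ (racgCS G).length (w * racgGen G b) < (racgCS G).length w) :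
    ∀ (μ : List V), (∀ v ∈ μ, v ∈ Λ) → (racgCS G).IsReduced μ →
      w⁻¹ * (racgCS G).wordProd μ * w ∈ specialSubgroup G T →
      ∀ x ∈ μ, racgGen G x * w = w * racgGen G x := by
  intro μ
  induction μ with
  | nil => intro _ _ _ x hx; simp at hx
  | cons a' μ' ih =>
    intro hμΛ hμred hconj x hx
    have ha'Λ : a' ∈ Λ := hμΛ a' (List.mem_cons_self)
    -- main derivation: racgGen a' commutes with w
    have hcomm : racgGen G a' * w = w * racgGen G a' := by
      obtain ⟨ν, hνred, hνT, hνprod⟩ := exists_reduced_word_subset G hconj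
      obtain ⟨κ, hκlen, hκprod⟩ := exists_reduced_word_old G w
      have hκred : (racgCS G).IsReduced κ := by
        show (racgCS G).length ((racgCS G).wordProd κ) = κ.length
        rw [← hκprod, hκlen]
      have hwv : w * (w⁻¹ * (racgCS G).wordProd (a' :: μ') * w) =
          (racgCS G).wordProd (a' :: μ') * w := by group
      have hu_w : (racgCS G).length ((racgCS G).wordProd (a' :: μ') * w) =
          (a' :: μ').length + (racgCS G).length w :=
        length_coset_left G hwstart hμΛ hμred
      have hlwv : (racgCS G).length (w * (racgCS G).wordProd ν) =
          (racgCS G).length w + ν.length :=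
        length_coset_right G ((racgCS G).length w) w rfl hwend ν hνT hνred
      rw [hνprod, hwv, hu_w] at hlwv
      have happred : (racgCS G).IsReduced (κ ++ ν) := by
        show (racgCS G).length ((racgCS G).wordProd (κ ++ ν)) = (κ ++ ν).length
        rw [wordProd_append, ← hκprod, hνprod, hwv, hu_w, List.length_append, hκlen]
        omega
      have happrod : (racgCS G).wordProd (κ ++ ν) =
          (racgCS G).wordProd (a' :: μ') * w := by
        rw [wordProd_append, ← hκprod, hνprod, hwv]
      have hπμ' : racgGen G a' * (racgCS G).wordProd (a' :: μ') =
          (racgCS G).wordProd μ' := by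
        rw [wordProd_cons, racgCS_simple, ← mul_assoc, racgGen_sq, one_mul]
      have hdesc : (racgCS G).length
            (racgGen G a' * ((racgCS G).wordProd (a' :: μ') * w)) <
          (racgCS G).length ((racgCS G).wordProd (a' :: μ') * w) := by
        have h1 : racgGen G a' * ((racgCS G).wordProd (a' :: μ') * w) =
            (racgCS G).wordProd μ' * w := by
          rw [← mul_assoc, hπμ']
        rw [h1, hu_w]
        calc (racgCS G).length ((racgCS G).wordProd μ' * w)
            ≤ (racgCS G).length ((racgCS G).wordProd μ') +
              (racgCS G).length w := (racgCS G).length_mul_le _ _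
          _ ≤ μ'.length + (racgCS G).length w :=
              add_le_add_left ((racgCS G).length_wordProd_le μ') _
          _ < (a' :: μ').length + (racgCS G).length w := by
              rw [List.length_cons]; omega
      obtain ⟨j, hj, heq, hconjj⟩ := left_exchange G hdesc happrod
      rcases lt_or_ge j κ.length with hjκ | hjκ
      · exfalso
        rw [List.eraseIdx_append_of_lt_length hjκ, wordProd_append] at heq
        have heq3 : racgGen G a' * w = (racgCS G).wordProd (κ.eraseIdx j) := by
          apply mul_right_cancel (b := w⁻¹ * (racgCS G).wordProd (a' :: μ') * w)
          calc racgGen G a' * w * (w⁻¹ * (racgCS G).wordProd (a' :: μ') * w)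
              = racgGen G a' * ((racgCS G).wordProd (a' :: μ') * w) := by group
            _ = (racgCS G).wordProd (κ.eraseIdx j) * (racgCS G).wordProd ν := heq
            _ = (racgCS G).wordProd (κ.eraseIdx j) *
                (w⁻¹ * (racgCS G).wordProd (a' :: μ') * w) := by rw [hνprod]
        apply hwstart a' ha'Λ
        have hle := (racgCS G).length_wordProd_le (κ.eraseIdx j)
        rw [← heq3] at hle
        have hlen1 := List.length_eraseIdx_add_one hjκ
        rw [hκlen] at *
        omega
      · -- j in the ν part
        have hjlt : j - κ.length < ν.length := by
          rw [List.length_append] at hj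
          omega
        have htake : (κ ++ ν).take j = κ ++ ν.take (j - κ.length) := by
          rw [List.take_append, List.take_of_length_le hjκ]
        have hgetj : (κ ++ ν).get ⟨j, hj⟩ = ν.get ⟨j - κ.length, hjlt⟩ := by
          rw [List.get_eq_getElem, List.get_eq_getElem,
            List.getElem_append_right hjκ]
        rw [htake, hgetj, wordProd_append, ← hκprod] at hconjj
        have hy : w⁻¹ * racgGen G a' * w =
            (racgCS G).wordProd (ν.take (j - κ.length)) *
              racgGen G (ν.get ⟨j - κ.length, hjlt⟩) *
              ((racgCS G).wordProd (ν.take (j - κ.length)))⁻¹ := by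
          rw [hconjj]
          group
        have hymem : w⁻¹ * racgGen G a' * w ∈ specialSubgroup G T := by
          rw [hy]
          refine Subgroup.mul_mem _ (Subgroup.mul_mem _ ?_ ?_) (Subgroup.inv_mem _ ?_)
          · exact wordProd_mem_special G
              (fun v hv => hνT v ((List.take_sublist _ _).subset hv))
          · exact Subgroup.subset_closure
              ⟨ν.get ⟨j - κ.length, hjlt⟩, hνT _ (List.get_mem ν ⟨j - κ.length, hjlt⟩), rfl⟩
          · exact wordProd_mem_special G
              (fun v hv => hνT v ((List.take_sublist _ _).subset hv))
        have hla' : (racgCS G).length (racgGen G a' * w) =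
            (racgCS G).length w + 1 := by
          have hdich := (racgCS G).length_simple_mul w a'
          rw [racgCS_simple] at hdich
          rcases hdich with h | h
          · exact h
          · exact absurd (by omega) (hwstart a' ha'Λ)
        obtain ⟨ρ, hρred, hρT, hρprod⟩ := exists_reduced_word_subset G hymem
        have hlenρ := length_coset_right G ((racgCS G).length w) w rfl hwend ρ hρT hρred
        rw [hρprod] at hlenρ
        have hwy : w * (w⁻¹ * racgGen G a' * w) = racgGen G a' * w := by group
        rw [hwy, hla'] at hlenρ
        have hρ1 : ρ.length = 1 := by omega
        obtain ⟨d, rfl⟩ := List.length_eq_one_iff.mp hρ1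
        have hyd : w⁻¹ * racgGen G a' * w = racgGen G d := by
          rw [← hρprod, wordProd_singleton, racgCS_simple]
        have had : a' = d := by
          apply conj_gen_eq G (w := w)
          rw [← hyd]
          group
        rw [← had] at hyd
        calc racgGen G a' * w = w * (w⁻¹ * racgGen G a' * w) := by group
          _ = w * racgGen G a' := by rw [hyd]
    rcases List.mem_cons.mp hx with rfl | hx'
    · exact hcomm
    · -- recurse
      have hμ'red : (racgCS G).IsReduced μ' := by
        have := hμred.drop 1
        simpa using this
      have hμ'Λ : ∀ v ∈ μ', v ∈ Λ := fun v hv => hμΛ v (List.mem_cons_of_mem _ hv)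
      have hwcomm' : w⁻¹ * racgGen G a' = racgGen G a' * w⁻¹ := by
        calc w⁻¹ * racgGen G a' = w⁻¹ * (racgGen G a' * w) * w⁻¹ := by group
          _ = w⁻¹ * (w * racgGen G a') * w⁻¹ := by rw [hcomm]
          _ = racgGen G a' * w⁻¹ := by group
      have hμ'conj : w⁻¹ * (racgCS G).wordProd μ' * w ∈ specialSubgroup G T := by
        have h1 : (racgCS G).wordProd μ' =
            racgGen G a' * (racgCS G).wordProd (a' :: μ') := by
          rw [wordProd_cons, racgCS_simple, ← mul_assoc, racgGen_sq, one_mul]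
        have h2 : w⁻¹ * (racgCS G).wordProd μ' * w =
            racgGen G a' * (w⁻¹ * (racgCS G).wordProd (a' :: μ') * w) := by
          rw [h1, ← mul_assoc, ← mul_assoc, hwcomm']
          group
        rw [h2]
        exact Subgroup.mul_mem _
          (Subgroup.subset_closure ⟨a', hΛT ha'Λ, rfl⟩) hconj
      exact ih hμ'Λ hμ'red hμ'conj x hx'

end RacgAux
open RacgAux CoxeterSystem List in
/-- If `g W_{Λ ∪ Link Λ} g⁻¹ ⊇ W_Λ` and `g = g₁ g₂ g₃` with `g₁ ∈ W_Λ`,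
`g₃ ∈ W_{Λ ∪ Link Λ}`, `g₂` having no letters from `Λ` at the start and no letters from
`Λ ∪ Link Λ` at the end, then `g₂ ∈ W_{Link(Λ ∪ Link Λ)}` and `g ∈ W_{Λ ∪ Link Λ}`. -/
theorem racg_conjugating_element_in_special_subgroup
    {V : Type*} [Fintype V] (G : SimpleGraph V) (Λ : Set V) (g g₁ g₂ g₃ : RACG G)
    (hconj : specialSubgroup G Λ ≤
      Subgroup.map (MulAut.conj g).toMonoidHom (specialSubgroup G (Λ ∪ linkSet G Λ)))
    (hg : g = g₁ * g₂ * g₃)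
    (hg₁ : g₁ ∈ specialSubgroup G Λ)
    (hg₃ : g₃ ∈ specialSubgroup G (Λ ∪ linkSet G Λ))
    (hstart : ∀ a ∈ Λ, ¬ wordLength G (racgGen G a * g₂) < wordLength G g₂)
    (hend : ∀ a ∈ Λ ∪ linkSet G Λ, ¬ wordLength G (g₂ * racgGen G a) < wordLength G g₂) :
    g₂ ∈ specialSubgroup G (linkSet G (Λ ∪ linkSet G Λ)) ∧
      g ∈ specialSubgroup G (Λ ∪ linkSet G Λ) := by
  classical
  have hstart' : ∀ a ∈ Λ,
      ¬ (racgCS G).length (racgGen G a * g₂) < (racgCS G).length g₂ := by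
    intro a ha
    have := hstart a ha
    rwa [wordLength_eq, wordLength_eq] at this
  have hend' : ∀ a ∈ Λ ∪ linkSet G Λ,
      ¬ (racgCS G).length (g₂ * racgGen G a) < (racgCS G).length g₂ := by
    intro a ha
    have := hend a ha
    rwa [wordLength_eq, wordLength_eq] at this
  have hg₂1 : g₂ = 1 := by
    by_contra hne
    obtain ⟨κ, hκlen, hκprod⟩ := exists_reduced_word_old G g₂
    have hκne : κ ≠ [] := by
      intro h
      rw [h] at hκprod
      simp at hκprod
      exact hne hκprod
    obtain ⟨c, hc⟩ : ∃ c, c = κ.getLast hκne := ⟨_, rfl⟩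
    have hsplit : κ.dropLast ++ [c] = κ := by
      rw [hc]
      exact List.dropLast_append_getLast hκne
    have hdesc_c : (racgCS G).length (g₂ * racgGen G c) < (racgCS G).length g₂ := by
      have h1 : g₂ * racgGen G c = (racgCS G).wordProd κ.dropLast := by
        conv_lhs => rw [hκprod, ← hsplit]
        rw [wordProd_append, wordProd_singleton, racgCS_simple,
          mul_assoc, racgGen_sq, mul_one]
      have h2 := (racgCS G).length_wordProd_le κ.dropLast
      rw [← h1] at h2
      have h3 : κ.dropLast.length + 1 = κ.length := by
        conv_rhs => rw [← hsplit]
        rw [List.length_append, List.length_singleton]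
      omega
    have hcT : c ∉ Λ ∪ linkSet G Λ := fun hcT => hend' c hcT hdesc_c
    have hcΛ : c ∉ linkSet G Λ := fun h => hcT (Or.inr h)
    obtain ⟨a, haΛ, hnadj⟩ : ∃ a ∈ Λ, ¬ G.Adj c a := by
      by_contra h
      push_neg at h
      exact hcΛ (fun s hs => h s hs)
    obtain ⟨h0, hh0, hgh0⟩ := Subgroup.mem_map.mp
      (hconj (Subgroup.subset_closure ⟨a, haΛ, rfl⟩))
    have hgh0' : g * h0 * g⁻¹ = racgGen G a := by
      have : (MulAut.conj g).toMonoidHom h0 = g * h0 * g⁻¹ := rfl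
      rw [← this, hgh0]
    have huT : g₂⁻¹ * (g₁⁻¹ * racgGen G a * g₁) * g₂ ∈
        specialSubgroup G (Λ ∪ linkSet G Λ) := by
      have hkey : g₂⁻¹ * (g₁⁻¹ * racgGen G a * g₁) * g₂ = g₃ * h0 * g₃⁻¹ := by
        rw [← hgh0', hg]
        group
      rw [hkey]
      exact Subgroup.mul_mem _ (Subgroup.mul_mem _ hg₃ hh0) (Subgroup.inv_mem _ hg₃)
    have humem : g₁⁻¹ * racgGen G a * g₁ ∈ specialSubgroup G Λ :=
      Subgroup.mul_mem _
        (Subgroup.mul_mem _ (Subgroup.inv_mem _ hg₁)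
          (Subgroup.subset_closure ⟨a, haΛ, rfl⟩)) hg₁
    obtain ⟨μ, hμred, hμΛ, hμprod⟩ := exists_reduced_word_subset G humem
    have haμ : a ∈ μ := by
      have h1 : theta G a (g₁⁻¹ * racgGen G a * g₁) = Multiplicative.ofAdd 1 := by
        rw [map_mul, map_mul, map_inv, theta_gen, if_pos rfl]
        rw [mul_comm ((theta G a g₁)⁻¹) (Multiplicative.ofAdd 1), mul_assoc,
          inv_mul_cancel, mul_one]
      have h2 : theta G a ((racgCS G).wordProd μ) =
          Multiplicative.ofAdd ((μ.count a : ZMod 2)) := by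
        rw [racgCS_wordProd]
        exact theta_prod G a μ
      rw [hμprod, h1] at h2
      have h3 : ((μ.count a : ZMod 2)) = 1 := by
        have := congrArg Multiplicative.toAdd h2
        simpa using this.symm
      by_contra hmem
      rw [List.count_eq_zero.mpr hmem] at h3
      simp at h3
    have hcomm := commute_of_conj G Λ (Λ ∪ linkSet G Λ) Set.subset_union_left g₂
      hstart' hend' μ hμΛ hμred (by rw [hμprod]; exact huT) a haμ
    have hlga : (racgCS G).length (g₂ * racgGen G a) = (racgCS G).length g₂ + 1 := by
      have hdich := (racgCS G).length_mul_simple g₂ a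
      rw [racgCS_simple] at hdich
      rcases hdich with h | h
      · exact h
      · exact absurd (by omega) (hend' a (Or.inl haΛ))
    obtain ⟨κ', hκ'red, hκ'prod, hκ'adj⟩ :=
      exists_adj_word G ((racgCS G).length g₂) g₂ a rfl hcomm hlga
    obtain ⟨j, hj, heq2, hconj2⟩ := right_exchange G hdesc_c hκ'prod
    have hc' : c = κ'.get ⟨j, hj⟩ := by
      apply conj_gen_eq G (w := ((racgCS G).wordProd (κ'.drop (j + 1)))⁻¹)
      rw [inv_inv]
      exact hconj2
    have hadj : G.Adj (κ'.get ⟨j, hj⟩) a := hκ'adj _ (List.get_mem κ' ⟨j, hj⟩)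
    rw [← hc'] at hadj
    exact hnadj hadj
  constructor
  · rw [hg₂1]
    exact Subgroup.one_mem _
  · rw [hg, hg₂1, mul_one]
    exact Subgroup.mul_mem _ (special_mono G Set.subset_union_left hg₁) hg₃
end

section
/- Let Γ be a finite simple graph not containing K_{2,3} or K_{2,3}⁺ as an induced subgraph, and suppose there is an induced subgraph Λ ⊆ Γ containing two non-adjacent vertices such that Λ ∪ Link(Λ) = Γ. Then for any vertex v ∈ Link(Λ), the set Γ \ Star(v) contains at most one vertex. -/
/-- The complete bipartite graph `K_{2,3}` with parts `Fin 2` and `Fin 3`. -/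
def K23 : SimpleGraph (Fin 2 ⊕ Fin 3) where
  Adj x y := (x.isLeft ∧ y.isRight) ∨ (x.isRight ∧ y.isLeft)
  symm := ⟨by intro x y; revert x y; decide⟩
  loopless := ⟨by intro x; revert x; decide⟩

/-- `K_{2,3}⁺`: the graph `K_{2,3}` with one extra edge joining `b₁ = inr 0` and
`b₂ = inr 1` in the size-3 part. -/
def K23plus : SimpleGraph (Fin 2 ⊕ Fin 3) where
  Adj x y := (x.isLeft ∧ y.isRight) ∨ (x.isRight ∧ y.isLeft) ∨
    (x = Sum.inr 0 ∧ y = Sum.inr 1) ∨ (x = Sum.inr 1 ∧ y = Sum.inr 0)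
  symm := ⟨by intro x y; revert x y; decide⟩
  loopless := ⟨by intro x; revert x; decide⟩

/-- `G` contains `Hg` as an induced subgraph. -/
def ContainsInduced {α V : Type*} (Hg : SimpleGraph α) (G : SimpleGraph V) : Prop :=
  ∃ f : α → V, Function.Injective f ∧ ∀ a b, G.Adj (f a) (f b) ↔ Hg.Adj a b

/-- The group of order two, written multiplicatively. -/
abbrev Z2 : Type := Multiplicative (ZMod 2)

/-- If `Γ` contains neither `K_{2,3}` nor `K_{2,3}⁺` as an induced subgraph, `Λ`
contains two non-adjacent vertices and `Λ ∪ Link(Λ) = Γ`, then for every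
`v ∈ Link(Λ)` the complement of `Star(v)` has at most one vertex. -/
theorem costar_subsingleton_of_no_K23
    {V : Type*} [Fintype V] (G : SimpleGraph V)
    (hK : ¬ ContainsInduced K23 G) (hKplus : ¬ ContainsInduced K23plus G)
    (Λ : Set V)
    (hnonadj : ∃ a ∈ Λ, ∃ b ∈ Λ, a ≠ b ∧ ¬ G.Adj a b)
    (hcover : Λ ∪ linkSet G Λ = Set.univ) :
    ∀ v ∈ linkSet G Λ, {u : V | u ≠ v ∧ ¬ G.Adj v u}.Subsingleton := by
  intro v hv x hx y hy
  by_contra hxy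
  obtain ⟨a, ha, b, hb, hab, hnab⟩ := hnonadj
  simp only [Set.mem_setOf_eq] at hx hy
  obtain ⟨hxv, hvx⟩ := hx
  obtain ⟨hyv, hvy⟩ := hy
  have hxlink : x ∈ linkSet G Λ := by
    rcases (hcover ▸ Set.mem_univ x : x ∈ Λ ∪ linkSet G Λ) with h | h
    · exact absurd (hv x h) hvx
    · exact h
  have hylink : y ∈ linkSet G Λ := by
    rcases (hcover ▸ Set.mem_univ y : y ∈ Λ ∪ linkSet G Λ) with h | h
    · exact absurd (hv y h) hvy
    · exact h
  have hva : G.Adj v a := hv a ha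
  have hvb : G.Adj v b := hv b hb
  have hxa : G.Adj x a := hxlink a ha
  have hxb : G.Adj x b := hxlink b hb
  have hya : G.Adj y a := hylink a ha
  have hyb : G.Adj y b := hylink b hb
  set f : Fin 2 ⊕ Fin 3 → V := Sum.elim ![a, b] ![x, y, v] with hf
  have hxa' : x ≠ a := fun h => hvx (h ▸ hva)
  have hxb' : x ≠ b := fun h => hvx (h ▸ hvb)
  have hya' : y ≠ a := fun h => hvy (h ▸ hva)
  have hyb' : y ≠ b := fun h => hvy (h ▸ hvb)
  have hva' : v ≠ a := G.ne_of_adj hva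
  have hvb' : v ≠ b := G.ne_of_adj hvb
  have hinj : Function.Injective f := by
    intro p q hpq
    rcases p with i | i <;> rcases q with j | j <;>
      fin_cases i <;> fin_cases j <;>
      simp_all [hf, Matrix.cons_val_zero, Matrix.cons_val_one] <;>
      first
        | rfl
        | (exact absurd hpq (by tauto))
        | (exact absurd hpq.symm (by tauto))
  by_cases hXY : G.Adj x y
  · apply hKplus
    refine ⟨f, hinj, ?_⟩
    intro p q
    rcases p with i | i <;> rcases q with j | j <;>
      fin_cases i <;> fin_cases j <;>
      simp [hf, K23plus, SimpleGraph.irrefl] <;>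
      first
        | exact hxa.symm | exact hxb.symm | exact hya.symm | exact hyb.symm
        | exact hva.symm | exact hvb.symm
        | exact hxa | exact hxb | exact hya | exact hyb | exact hva | exact hvb
        | exact hXY | exact hXY.symm
        | exact hnab | (exact fun h => hnab h.symm)
        | exact hvx | (exact fun h => hvx h.symm)
        | exact hvy | (exact fun h => hvy h.symm)
  · apply hK
    refine ⟨f, hinj, ?_⟩
    intro p q
    rcases p with i | i <;> rcases q with j | j <;>
      fin_cases i <;> fin_cases j <;>
      simp [hf, K23, SimpleGraph.irrefl] <;>
      first
        | exact hxa.symm | exact hxb.symm | exact hya.symm | exact hyb.symm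
        | exact hva.symm | exact hvb.symm
        | exact hxa | exact hxb | exact hya | exact hyb | exact hva | exact hvb
        | exact hnab | (exact fun h => hnab h.symm)
        | exact hXY | (exact fun h => hXY h.symm)
        | exact hvx | (exact fun h => hvx h.symm)
        | exact hvy | (exact fun h => hvy h.symm)
end
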